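/- If a family of metric subspaces X is R-decomposable over a family Y (each member of X is a union of two R-disjoint subfamilies of members of Y), then for any D with 2D < R, the family of D-enlargements {U[D] : U ∈ X, taken inside a common ambient metric space} is (R − 2D)-decomposable over the family of D-enlargements of members of Y. -/

import Mathlib

open Metric Set

/-- The `b`-enlargement of a subset `S` of a metric space. -/
def enl {X : Type*} [MetricSpace X] (S : Set X) (b : ℝ) : Set X :=
  {x | ∃ s ∈ S, dist x s ≤ b}

/-- A collection of subsets (given as a set of sets) is `r`-disjoint if each
member's `r`-enlargement misses the union of the other members. -/
def SetRDisjoint {X : Type*} [MetricSpace X] (r : ℝ) (I : Set (Set X)) : Prop :=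
  ∀ S ∈ I, enl S r ∩ ⋃₀ (I \ {S}) = ∅

/-- A family `A` is `r`-decomposable over a family `B` if every member of `A`
is the union of two `r`-disjoint subcollections of members of `B`. -/
def Decomp {X : Type*} [MetricSpace X] (r : ℝ) (A B : Set (Set X)) : Prop :=
  ∀ Y ∈ A, ∃ I J : Set (Set X), I ⊆ B ∧ J ⊆ B ∧ Y = ⋃₀ I ∪ ⋃₀ J ∧
    SetRDisjoint r I ∧ SetRDisjoint r J

lemma enl_sUnion {X : Type*} [MetricSpace X] (I : Set (Set X)) (D : ℝ) :
    enl (⋃₀ I) D = ⋃₀ ((fun S => enl S D) '' I) := by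
  ext x
  simp only [enl, mem_setOf_eq, mem_sUnion, mem_image]
  constructor
  · rintro ⟨s, ⟨T, hT, hsT⟩, hd⟩
    exact ⟨enl T D, ⟨T, hT, rfl⟩, s, hsT, hd⟩
  · rintro ⟨_, ⟨T, hT, rfl⟩, s, hsT, hd⟩
    exact ⟨s, ⟨T, hT, hsT⟩, hd⟩

lemma disjoint_enl {X : Type*} [MetricSpace X] {I : Set (Set X)} {R D : ℝ}
    (hD : 0 ≤ D) (hI : SetRDisjoint R I) :
    SetRDisjoint (R - 2 * D) ((fun S => enl S D) '' I) := by
  rintro S' ⟨S, hS, rfl⟩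
  ext x
  simp only [mem_inter_iff, mem_empty_iff_false, iff_false]
  rintro ⟨⟨s', ⟨s, hs, hs's⟩, hxs'⟩, T', ⟨⟨T, hT, rfl⟩, hTne⟩, hxT⟩
  obtain ⟨t, htT, hxt⟩ := hxT
  have hTS : T ≠ S := fun hTS => hTne (by rw [hTS]; rfl)
  have : t ∈ enl S R ∩ ⋃₀ (I \ {S}) := by
    refine ⟨⟨s, hs, ?_⟩, T, ⟨hT, hTS⟩, htT⟩
    calc dist t s ≤ dist t x + dist x s' + dist s' s := dist_triangle4 t x s' s
    _ ≤ D + (R - 2 * D) + D := by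
        rw [dist_comm t x]
        exact add_le_add (add_le_add hxt hxs') hs's
    _ = R := by ring
  rw [hI S hS] at this
  exact this

/-- If a family `A` is `R`-decomposable over `B`, then for `2D < R` the family
of `D`-enlargements of members of `A` is `(R - 2D)`-decomposable over the family
of `D`-enlargements of members of `B`. -/
theorem decomp_enlarge {X : Type*} [MetricSpace X] (A B : Set (Set X))
    (R D : ℝ) (hD : 0 ≤ D) (hRD : 2 * D < R) (h : Decomp R A B) :
    Decomp (R - 2 * D) ((fun S => enl S D) '' A) ((fun S => enl S D) '' B) := by
  rintro Y' ⟨Y, hY, rfl⟩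
  obtain ⟨I, J, hIB, hJB, hYIJ, hI, hJ⟩ := h Y hY
  refine ⟨(fun S => enl S D) '' I, (fun S => enl S D) '' J,
    image_mono hIB, image_mono hJB, ?_, disjoint_enl hD hI, disjoint_enl hD hJ⟩
  rw [← enl_sUnion, ← enl_sUnion, hYIJ]
  ext x
  simp only [enl, mem_setOf_eq, mem_union]
  constructor
  · rintro ⟨s, hs | hs, hd⟩
    exacts [Or.inl ⟨s, hs, hd⟩, Or.inr ⟨s, hs, hd⟩]
  · rintro (⟨s, hs, hd⟩ | ⟨s, hs, hd⟩)
    exacts [⟨s, Or.inl hs, hd⟩, ⟨s, Or.inr hs, hd⟩]
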